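/- The Reversed Boethius' Thesis (RBT), ∼(A → ∼B) → (A → B), is not valid in Approach 1: there exist a measurable space Ω, a probability measure μ, and measurable sets A, B with μ(A) > 0 such that P(Bᶜ|A) ≠ 1 and P(B|A) ≠ 1. -/

import Mathlib

open MeasureTheory

/-- Conditional probability `P(E|H) = μ(E ∩ H) / μ(H)` as a real number. -/
noncomputable def condP {Ω : Type*} [MeasurableSpace Ω] (μ : Measure Ω) (E H : Set Ω) : ℝ :=
  (μ (E ∩ H)).toReal / (μ H).toReal

/-- The Reversed Boethius' Thesis (RBT) is not valid in Approach 1: there are a probability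
measure and measurable sets `A`, `B` with `μ A > 0` such that `P(Bᶜ|A) ≠ 1` and `P(B|A) ≠ 1`. -/
theorem reversed_boethius_thesis_not_valid_approach1 :
    ∃ (Ω : Type) (_ : MeasurableSpace Ω) (μ : Measure Ω),
      IsProbabilityMeasure μ ∧
      ∃ A B : Set Ω, MeasurableSet A ∧ MeasurableSet B ∧
        0 < μ A ∧ condP μ Bᶜ A ≠ 1 ∧ condP μ B A ≠ 1 := by
  refine ⟨Bool, ⊤, (PMF.uniformOfFintype Bool).toMeasure, inferInstance,
    Set.univ, {true}, MeasurableSet.univ, trivial, ?_, ?_, ?_⟩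
  · simp
  all_goals
    simp only [condP, Set.inter_univ, Set.compl_eq_univ_diff]
    rw [measure_univ, PMF.toMeasure_apply _ MeasurableSpace.measurableSet_top]
    norm_num [PMF.uniformOfFintype_apply, Set.indicator, tsum_bool]
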